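/- In the query phase, given a valid goal state s_goal in the finite goal region G, if every valid state of G is covered by some subregion (tᵢ, rᵢ) with the property that any valid covered state admits a valid greedy path to tᵢ, and the library contains a valid path πᵢ from s_start to each tᵢ, then the concatenation of πᵢ with the reversed greedy path from s_goal to tᵢ is a valid path from s_start to s_goal. -/

import Mathlib

/-- A path is valid if all its states are valid and all consecutive edges are valid. -/
def IsValidPath {S : Type*} (validS : S → Prop) (validE : S → S → Prop)
    (π : List S) : Prop :=
  (∀ s ∈ π, validS s) ∧ π.Chain' validE

/-- given a valid goal state covered by some subregion `(tᵢ, rᵢ)`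
such that any valid covered state admits a valid greedy path to `tᵢ`, and a
library path `πᵢ` from `s_start` to `tᵢ`, the concatenation of `πᵢ` with the
reversed greedy path from `s_goal` to `tᵢ` is a valid path from `s_start`
to `s_goal`. -/
theorem stmt_7 {S ι : Type*} [Fintype S] [Fintype ι]
    (h : S → S → ℝ) (validS : S → Prop) (validE : S → S → Prop)
    -- undirected graph: edge validity is symmetric
    (hsym : ∀ a b, validE a b → validE b a)
    (sstart sgoal : S) (t : ι → S) (r : ι → ℝ) (g : ι → S → S)
    (lib : ι → List S)
    -- each library path is a valid path from sstart to the attractor t i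
    (hlib : ∀ i, IsValidPath validS validE (lib i) ∧
      (lib i).head? = some sstart ∧ (lib i).getLast? = some (t i))
    (hvgoal : validS sgoal)
    -- coverage: some subregion covers the goal state
    (hcov : ∃ i, h sgoal (t i) < r i)
    -- any valid covered state admits a valid greedy path to the attractor
    (hreach : ∀ i, ∀ s, validS s → h s (t i) < r i →
      ∃ n : ℕ, (g i)^[n] s = t i ∧
        (∀ m ≤ n, validS ((g i)^[m] s)) ∧
        (∀ m < n, validE ((g i)^[m] s) ((g i)^[m + 1] s))) :
    ∃ i, h sgoal (t i) < r i ∧ ∃ n : ℕ, (g i)^[n] sgoal = t i ∧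
      IsValidPath validS validE
        (lib i ++ (((List.range (n + 1)).map (fun m => (g i)^[m] sgoal)).reverse).tail) ∧
      (lib i ++ (((List.range (n + 1)).map (fun m => (g i)^[m] sgoal)).reverse).tail).head?
        = some sstart ∧
      (lib i ++ (((List.range (n + 1)).map (fun m => (g i)^[m] sgoal)).reverse).tail).getLast?
        = some sgoal := by

  obtain ⟨i, hi⟩ := hcov
  obtain ⟨n, hn, hvalid, hE⟩ := hreach i sgoal hvgoal hi
  refine ⟨i, hi, n, hn, ?_⟩
  obtain ⟨⟨hlibS, hlibC⟩, hhead, hlast⟩ := hlib i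
  set f : ℕ → S := fun m => (g i)^[m] sgoal with hf
  -- membership in the greedy list gives validity
  have hmem : ∀ x ∈ ((List.range (n + 1)).map f).reverse.tail, validS x := by
    intro x hx
    have hx' : x ∈ (List.range (n + 1)).map f := by
      have := List.mem_of_mem_tail hx
      simpa using this
    obtain ⟨m, hm, rfl⟩ := List.mem_map.mp hx'
    exact hvalid m (Nat.lt_succ_iff.mp (List.mem_range.mp hm))
  have hchainL : ((List.range (n + 1)).map f).Chain' validE := by
    simp only [List.Chain']
    rw [List.isChain_map]
    rw [show n + 1 = n.succ from rfl, List.isChain_range_succ]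
    intro m hm
    exact hE m hm
  have hchainR : ((List.range (n + 1)).map f).reverse.Chain' validE := by
    simp only [List.Chain']
    rw [List.isChain_reverse]
    exact hchainL.imp (fun a b hab => hsym _ _ hab)
  have hlibne : lib i ≠ [] := by
    intro hnil; rw [hnil] at hhead; simp at hhead
  constructor
  · -- IsValidPath
    constructor
    · intro s hs
      rcases List.mem_append.mp hs with hs | hs
      · exact hlibS s hs
      · exact hmem s hs
    · simp only [List.Chain']
      rw [List.isChain_append]
      refine ⟨hlibC, hchainR.tail, ?_⟩
      intro x hx y hy
      rw [hlast] at hx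
      cases hx
      -- x = t i; now analyze the tail's head
      cases n with
      | zero => simp [hf] at hy
      | succ k =>
        have hsplit : (List.range (k + 1 + 1)).map f
            = ((List.range (k + 1)).map f) ++ [f (k + 1)] := by
          rw [List.range_succ, List.map_append]; rfl
        rw [hsplit, List.reverse_append] at hy
        simp only [List.reverse_singleton, List.singleton_append, List.tail_cons] at hy
        have hh : ((List.range (k + 1)).map f).reverse.head? = some (f k) := by
          rw [List.head?_reverse]
          simp [List.range_succ]
        rw [hh] at hy
        cases hy
        have : validE (f k) (f (k + 1)) := hE k (Nat.lt_succ_self k)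
        have := hsym _ _ this
        rw [hf] at this
        simpa [hn] using this
  constructor
  · rw [List.head?_append, hhead]; rfl
  · cases n with
    | zero =>
      simp only [hf, List.range_succ, List.range_zero, List.nil_append, List.map_cons,
        List.map_nil, List.reverse_cons, List.reverse_nil, List.tail_cons, List.append_nil]
      rw [hlast]
      have : t i = sgoal := by rw [← hn]; rfl
      rw [this]
    | succ k =>
      have hsplit : (List.range (k + 1 + 1)).map f
          = ((List.range (k + 1)).map f) ++ [f (k + 1)] := by
        rw [List.range_succ, List.map_append]; rfl
      rw [hsplit, List.reverse_append]
      simp only [List.reverse_singleton, List.singleton_append, List.tail_cons]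
      have hne : ((List.range (k + 1)).map f).reverse ≠ [] := by simp
      rw [List.getLast?_append_of_ne_nil _ hne, List.getLast?_reverse]
      rw [List.range_succ_eq_map]
      simp [hf]
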